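/- Fix finite sets W, Z, distributions μ, μ' on Z, a loss ℓ, an auxiliary loss ℓ̃, and n ≥ 1. Let v_n = E_{S'∼μ'^{⊗n}}[min_w (1/n)Σ_i ℓ̃(w, Z'_i)]. Define D₁(r) = sup over kernels P_{W'|S'} with I(W';S') ≤ r of E[L_μ(W') − (1/n)Σ_i ℓ(W',Z'_i)], and D̃₂(ρ) = max over P_{Ŵ|Z̃} with Z̃ ∼ μ', I(Ŵ;Z̃) ≤ ρ, and E[ℓ̃(Ŵ,Z̃)] ≥ v_n of E[L_μ(Ŵ) − ℓ(Ŵ,Z̃)]. Then D₁(r) ≤ D̃₂(r/n) ≤ D₂(r/n), where D₂ is defined like D̃₂ but without the auxiliary-loss constraint. -/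

import Mathlib

open scoped BigOperators

noncomputable def mutInfo {A B : Type*} [Fintype A] [Fintype B]
    (p : A × B → ℝ) : ℝ :=
  ∑ x : A × B,
    p x * Real.log (p x / ((∑ b, p (x.1, b)) * ∑ a, p (a, x.2)))

/-- Gibbs' inequality in difference form. -/
lemma gibbs_aux {ι : Type*} [Fintype ι] (a b : ι → ℝ) (ha : ∀ i, 0 ≤ a i)
    (hb : ∀ i, 0 ≤ b i) (hab : ∀ i, a i ≠ 0 → b i ≠ 0) :
    (∑ i, a i) - (∑ i, b i) ≤ ∑ i, a i * Real.log (a i / b i) := by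
  rw [← Finset.sum_sub_distrib]
  apply Finset.sum_le_sum
  intro i _
  rcases eq_or_lt_of_le (ha i) with h | h
  · simp only [← h, zero_mul, zero_sub, neg_nonpos]
    exact hb i
  · have hbpos : 0 < b i := (hb i).lt_of_ne (Ne.symm (hab i h.ne'))
    have hlog : Real.log (b i / a i) ≤ b i / a i - 1 :=
      Real.log_le_sub_one_of_pos (div_pos hbpos h)
    have h1 : a i * Real.log (b i / a i) ≤ a i * (b i / a i - 1) :=
      mul_le_mul_of_nonneg_left hlog h.le
    have h2 : a i * (b i / a i - 1) = b i - a i := by field_simp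
    have h3 : Real.log (a i / b i) = - Real.log (b i / a i) := by
      rw [← Real.log_inv, inv_div]
    rw [h3]
    nlinarith

/-- Sum over tuples of a product equals product of sums. -/
lemma sum_pi_prod {Z : Type*} [Fintype Z] (n : ℕ) (g : Fin n → Z → ℝ) :
    ∑ s : Fin n → Z, ∏ i, g i (s i) = ∏ i, ∑ z, g i z := (Fintype.prod_sum g).symm

/-- Single-coordinate expectation under an i.i.d. product. -/
lemma sum_pi_coord {Z : Type*} [Fintype Z] {n : ℕ} (ν : Z → ℝ) (hν : ∑ z, ν z = 1)
    (i : Fin n) (F : Z → ℝ) :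
    ∑ s : Fin n → Z, (∏ j, ν (s j)) * F (s i) = ∑ z, ν z * F z := by
  classical
  set g : Fin n → Z → ℝ := fun j z => if j = i then ν z * F z else ν z with hg
  have h2 : ∑ s : Fin n → Z, ∏ j, g j (s j) = ∏ j, ∑ z, g j z := sum_pi_prod n g
  have h1 : ∀ s : Fin n → Z, (∏ j, ν (s j)) * F (s i) = ∏ j, g j (s j) := by
    intro s
    rw [Finset.prod_eq_mul_prod_sdiff_singleton_of_mem (Finset.mem_univ i) (fun j => g j (s j)),
        Finset.prod_eq_mul_prod_sdiff_singleton_of_mem (Finset.mem_univ i) (fun j => ν (s j))]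
    have hgi : g i (s i) = ν (s i) * F (s i) := by simp [hg]
    have hrest : ∏ j ∈ Finset.univ \ {i}, g j (s j) = ∏ j ∈ Finset.univ \ {i}, ν (s j) :=
      Finset.prod_congr rfl fun j hj => by
        have hji : ¬ j = i := by simpa using (Finset.mem_sdiff.mp hj).2
        simp [hg, hji]
    rw [hgi, hrest]; ring
  rw [Finset.sum_congr rfl fun s _ => h1 s, h2,
      Finset.prod_eq_mul_prod_sdiff_singleton_of_mem (Finset.mem_univ i) (fun j => ∑ z, g j z)]
  have hgi : ∑ z, g i z = ∑ z, ν z * F z := by simp [hg]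
  have hrest : ∏ j ∈ Finset.univ \ {i}, ∑ z, g j z = 1 := by
    apply Finset.prod_eq_one
    intro j hj
    have hji : ¬ j = i := by simpa using (Finset.mem_sdiff.mp hj).2
    simp [hg, hji, hν]
  rw [hgi, hrest, mul_one]

/-- Collapsing a coordinate-grouped sum. -/
lemma group_coord {Z : Type*} [Fintype Z] [DecidableEq Z] {n : ℕ} (i : Fin n)
    (q : (Fin n → Z) → ℝ) (L : Z → ℝ) :
    ∑ z, (∑ s : Fin n → Z, if s i = z then q s else 0) * L z
      = ∑ s : Fin n → Z, q s * L (s i) := by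
  simp only [Finset.sum_mul, ite_mul, zero_mul]
  rw [Finset.sum_comm]
  refine Finset.sum_congr rfl fun s _ => ?_
  rw [Finset.sum_ite_eq Finset.univ (s i) (fun z => q s * L z)]
  simp

/-- Mutual information of a point-mass times a distribution is zero. -/
lemma mutInfo_det {A B : Type*} [Fintype A] [Fintype B] [DecidableEq A]
    (a0 : A) (ν : B → ℝ) (hν : ∑ b, ν b = 1) :
    mutInfo (fun x : A × B => (if x.1 = a0 then 1 else 0) * ν x.2) = 0 := by
  unfold mutInfo
  apply Finset.sum_eq_zero
  rintro ⟨a, b⟩ -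
  by_cases ha : a = a0
  · by_cases hb : ν b = 0
    · simp [ha, hb]
    · simp [ha, hν, div_self hb]
  · simp [ha]

/-- A convex-combination bound: `∑ p i * c i ≤ max c`. -/
lemma sum_mul_le_sup' {ι : Type*} [Fintype ι] [Nonempty ι] (p c : ι → ℝ)
    (hp : ∀ i, 0 ≤ p i) (hp1 : ∑ i, p i = 1) :
    ∑ i, p i * c i ≤ Finset.univ.sup' Finset.univ_nonempty c := by
  calc ∑ i, p i * c i
      ≤ ∑ i, p i * Finset.univ.sup' Finset.univ_nonempty c := by
        refine Finset.sum_le_sum fun i _ => ?_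
        exact mul_le_mul_of_nonneg_left (Finset.le_sup' c (Finset.mem_univ i)) (hp i)
    _ = Finset.univ.sup' Finset.univ_nonempty c := by rw [← Finset.sum_mul, hp1, one_mul]

variable {W Z : Type*} [Fintype W] [Nonempty W] [Fintype Z]

/-- The expected ERM value of the auxiliary loss ℓ̃ over S' ∼ μ'^{⊗n}. -/
noncomputable def vN (n : ℕ) (μ' : Z → ℝ) (ℓt : W → Z → ℝ) : ℝ :=
  ∑ s : Fin n → Z, (∏ i, μ' (s i)) *
    ⨅ w : W, (1 / (n : ℝ)) * ∑ i, ℓt w (s i)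

/-- D₁(r): the sharpest generalization bound over kernels with I(W';S') ≤ r. -/
noncomputable def D1 (n : ℕ) (μ μ' : Z → ℝ) (ℓ : W → Z → ℝ) (r : ℝ) : ℝ :=
  sSup {g : ℝ | ∃ q : W × (Fin n → Z) → ℝ, (∀ x, 0 ≤ q x) ∧
    (∑ x, q x = 1) ∧ (∀ s : Fin n → Z, (∑ w, q (w, s)) = ∏ i, μ' (s i)) ∧
    mutInfo q ≤ r ∧
    g = ∑ x : W × (Fin n → Z), q x *
      ((∑ z, μ z * ℓ x.1 z) - (1 / (n : ℝ)) * ∑ i, ℓ x.1 (x.2 i))}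

/-- D̃₂(ρ): single-letter bound with the auxiliary-loss constraint
E[ℓ̃(Ŵ,Z̃)] ≥ vₙ. -/
noncomputable def D2tilde (n : ℕ) (μ μ' : Z → ℝ) (ℓ ℓt : W → Z → ℝ)
    (ρ : ℝ) : ℝ :=
  sSup {g : ℝ | ∃ p : W × Z → ℝ, (∀ x, 0 ≤ p x) ∧ (∑ x, p x = 1) ∧
    (∀ z, (∑ w, p (w, z)) = μ' z) ∧ mutInfo p ≤ ρ ∧
    (∑ x : W × Z, p x * ℓt x.1 x.2) ≥ vN n μ' ℓt ∧
    g = ∑ x : W × Z, p x * ((∑ z, μ z * ℓ x.1 z) - ℓ x.1 x.2)}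

/-- D₂(ρ): single-letter bound without the auxiliary-loss constraint. -/
noncomputable def D2 (μ μ' : Z → ℝ) (ℓ : W → Z → ℝ) (ρ : ℝ) : ℝ :=
  sSup {g : ℝ | ∃ p : W × Z → ℝ, (∀ x, 0 ≤ p x) ∧ (∑ x, p x = 1) ∧
    (∀ z, (∑ w, p (w, z)) = μ' z) ∧ mutInfo p ≤ ρ ∧
    g = ∑ x : W × Z, p x * ((∑ z, μ z * ℓ x.1 z) - ℓ x.1 x.2)}

/-- The time-sharing construction: from a kernel on samples to a single-letter kernel. -/
lemma construct_mem (n : ℕ) (hn : 0 < n) (μ μ' : Z → ℝ)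
    (hμ'0 : ∀ z, 0 ≤ μ' z) (hμ'1 : ∑ z, μ' z = 1)
    (ℓ ℓt : W → Z → ℝ) (r : ℝ)
    (q : W × (Fin n → Z) → ℝ) (hq0 : ∀ x, 0 ≤ q x) (hq1 : ∑ x, q x = 1)
    (hqm : ∀ s : Fin n → Z, (∑ w, q (w, s)) = ∏ i, μ' (s i)) (hqI : mutInfo q ≤ r) :
    ∃ p : W × Z → ℝ, (∀ x, 0 ≤ p x) ∧ (∑ x, p x = 1) ∧
      (∀ z, (∑ w, p (w, z)) = μ' z) ∧ mutInfo p ≤ r / n ∧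
      (∑ x : W × Z, p x * ℓt x.1 x.2) ≥ vN n μ' ℓt ∧
      (∑ x : W × Z, p x * ((∑ z, μ z * ℓ x.1 z) - ℓ x.1 x.2))
        = ∑ x : W × (Fin n → Z), q x *
          ((∑ z, μ z * ℓ x.1 z) - (1 / (n : ℝ)) * ∑ i, ℓ x.1 (x.2 i)) := by
  classical
  have hnR : (0:ℝ) < n := by exact_mod_cast hn
  set qW : W → ℝ := fun w => ∑ s, q (w, s) with hqW
  set qi : Fin n → W × Z → ℝ :=
    fun i x => ∑ s : Fin n → Z, if s i = x.2 then q (x.1, s) else 0 with hqidef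
  have hqi0 : ∀ i x, 0 ≤ qi i x := by
    intro i x
    simp only [hqidef]
    exact Finset.sum_nonneg fun s _ => by split <;> [exact hq0 _; exact le_rfl]
  have hqW0 : ∀ w, 0 ≤ qW w := fun w => Finset.sum_nonneg fun s _ => hq0 _
  have hqWsum : ∑ w, qW w = 1 := by
    simp only [hqW]; rw [← Fintype.sum_prod_type]; exact hq1
  have hqig : ∀ (i : Fin n) (w : W) (L : Z → ℝ),
      ∑ z, qi i (w, z) * L z = ∑ s : Fin n → Z, q (w, s) * L (s i) := by
    intro i w L
    simp only [hqidef]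
    exact group_coord i (fun s => q (w, s)) L
  have hqiW : ∀ (i : Fin n) (w : W), ∑ z, qi i (w, z) = qW w := by
    intro i w
    have := hqig i w (fun _ => 1)
    simpa using this
  have hqiZ : ∀ (i : Fin n) (z : Z), ∑ w, qi i (w, z) = μ' z := by
    intro i z
    simp only [hqidef]
    rw [Finset.sum_comm]
    have h1 : ∀ s : Fin n → Z, (∑ w, if s i = z then q (w, s) else 0)
        = (∏ j, μ' (s j)) * (if s i = z then 1 else 0) := by
      intro s; by_cases h : s i = z <;> simp [h, hqm s]
    rw [Finset.sum_congr rfl fun s _ => h1 s,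
      sum_pi_coord μ' hμ'1 i (fun z' => if z' = z then 1 else 0)]
    simp [mul_ite, Finset.sum_ite_eq']
  have hqi_le_qW : ∀ i w z, qi i (w, z) ≤ qW w := by
    intro i w z
    rw [← hqiW i w]
    exact Finset.single_le_sum (fun z' _ => hqi0 i (w, z')) (Finset.mem_univ z)
  have hqi_le_mu : ∀ i w z, qi i (w, z) ≤ μ' z := by
    intro i w z
    rw [← hqiZ i z]
    exact Finset.single_le_sum (fun w' _ => hqi0 i (w', z)) (Finset.mem_univ w)
  set p : W × Z → ℝ := fun x => (1/(n:ℝ)) * ∑ i, qi i x with hpdef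
  have hp0 : ∀ x, 0 ≤ p x := fun x =>
    mul_nonneg (by positivity) (Finset.sum_nonneg fun i _ => hqi0 i x)
  have hmargW : ∀ w, (∑ z, p (w, z)) = qW w := by
    intro w
    simp only [hpdef]
    rw [← Finset.mul_sum, Finset.sum_comm]
    rw [Finset.sum_congr rfl fun i _ => hqiW i w]
    rw [Finset.sum_const, Finset.card_univ, Fintype.card_fin, nsmul_eq_mul]
    field_simp
  have hmargZ : ∀ z, (∑ w, p (w, z)) = μ' z := by
    intro z
    simp only [hpdef]
    rw [← Finset.mul_sum, Finset.sum_comm]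
    rw [Finset.sum_congr rfl fun i _ => hqiZ i z]
    rw [Finset.sum_const, Finset.card_univ, Fintype.card_fin, nsmul_eq_mul]
    field_simp
  have hp1 : ∑ x, p x = 1 := by
    rw [Fintype.sum_prod_type, Finset.sum_congr rfl fun w _ => hmargW w]
    exact hqWsum
  have key : ∀ c : W → Z → ℝ, ∑ x : W × Z, p x * c x.1 x.2
      = ∑ w, ∑ s : Fin n → Z, q (w, s) * ((1/(n:ℝ)) * ∑ i, c w (s i)) := by
    intro c
    rw [Fintype.sum_prod_type]
    refine Finset.sum_congr rfl fun w _ => ?_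
    have e1 : ∀ z, p (w, z) * c w z = (1/(n:ℝ)) * ∑ i, qi i (w, z) * c w z := by
      intro z; simp only [hpdef]; rw [mul_assoc, Finset.sum_mul]
    have e2 : ∀ s : Fin n → Z, q (w, s) * ((1/(n:ℝ)) * ∑ i, c w (s i))
        = (1/(n:ℝ)) * ∑ i, q (w, s) * c w (s i) := by
      intro s; rw [← Finset.mul_sum]; ring
    rw [Finset.sum_congr rfl fun z _ => e1 z, Finset.sum_congr rfl fun s _ => e2 s,
      ← Finset.mul_sum, ← Finset.mul_sum]
    congr 1
    rw [Finset.sum_comm]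
    rw [Finset.sum_congr rfl fun i _ => hqig i w (c w)]
    exact Finset.sum_comm
  refine ⟨p, hp0, hp1, hmargZ, ?_, ?_, ?_⟩
  · -- mutual information bound
    have hMp : mutInfo p = ∑ x : W × Z, p x * Real.log (p x / (qW x.1 * μ' x.2)) := by
      unfold mutInfo
      refine Finset.sum_congr rfl fun x _ => ?_
      rw [hmargW x.1, hmargZ x.2]
    have hMq : mutInfo q = ∑ x : W × (Fin n → Z),
        q x * Real.log (q x / (qW x.1 * ∏ j, μ' (x.2 j))) := by
      unfold mutInfo
      refine Finset.sum_congr rfl fun x _ => ?_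
      rw [hqm x.2]
    set T : Fin n → ℝ := fun i => ∑ x : W × Z,
      qi i x * Real.log (qi i x / (qW x.1 * μ' x.2)) with hTdef
    have hA : mutInfo p ≤ (1/(n:ℝ)) * ∑ i, T i := by
      rw [hMp]
      have hpt : ∀ x : W × Z, p x * Real.log (p x / (qW x.1 * μ' x.2))
          ≤ (1/(n:ℝ)) * ∑ i, qi i x * Real.log (qi i x / (qW x.1 * μ' x.2)) := by
        rintro ⟨w, z⟩
        simp only
        rcases eq_or_lt_of_le (mul_nonneg (hqW0 w) (hμ'0 z)) with hc | hc
        · have hz : ∀ i, qi i (w, z) = 0 := by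
            intro i
            rcases mul_eq_zero.mp hc.symm with h | h
            · exact le_antisymm (by rw [← h]; exact hqi_le_qW i w z) (hqi0 _ _)
            · exact le_antisymm (by rw [← h]; exact hqi_le_mu i w z) (hqi0 _ _)
          have hp0' : p (w, z) = 0 := by
            simp only [hpdef]; rw [Finset.sum_congr rfl fun i _ => hz i]; simp
          rw [hp0']
          simp [hz]
        · set cst := qW w * μ' z with hcst
          have hψ : ConvexOn ℝ (Set.Ici 0)
              ((fun t => t * Real.log t) - (fun t => t * Real.log cst)) :=
            Real.convexOn_mul_log.sub ⟨convex_Ici 0, fun x _ y _ a b _ _ _ => by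
              simp only [smul_eq_mul]; exact le_of_eq (by ring)⟩
          have hφψ : ∀ t : ℝ, 0 ≤ t → t * Real.log (t / cst)
              = ((fun t => t * Real.log t) - (fun t => t * Real.log cst)) t := by
            intro t ht
            rcases eq_or_lt_of_le ht with h | h
            · simp [← h]
            · simp only [Pi.sub_apply]
              rw [Real.log_div h.ne' hc.ne']
              ring
          have hsumw : ∑ _i : Fin n, (1/(n:ℝ)) = 1 := by
            rw [Finset.sum_const, Finset.card_univ, Fintype.card_fin, nsmul_eq_mul,
              mul_one_div, div_self hnR.ne']
          have hJ := hψ.map_sum_le (t := Finset.univ) (w := fun _ : Fin n => (1/(n:ℝ)))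
            (p := fun i => qi i (w, z)) (fun i _ => by positivity) hsumw
            (fun i _ => hqi0 i (w, z))
          have hpx : p (w, z) = ∑ i, (1/(n:ℝ)) • qi i (w, z) := by
            simp only [hpdef, smul_eq_mul]
            rw [Finset.mul_sum]
          calc p (w, z) * Real.log (p (w, z) / cst)
              = ((fun t => t * Real.log t) - (fun t => t * Real.log cst)) (p (w, z)) :=
                hφψ _ (hp0 (w, z))
            _ = ((fun t => t * Real.log t) - (fun t => t * Real.log cst))
                (∑ i, (1/(n:ℝ)) • qi i (w, z)) := by rw [← hpx]
            _ ≤ ∑ i, (1/(n:ℝ)) • ((fun t => t * Real.log t) - (fun t => t * Real.log cst))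
                (qi i (w, z)) := hJ
            _ = (1/(n:ℝ)) * ∑ i, qi i (w, z) * Real.log (qi i (w, z) / cst) := by
                rw [Finset.mul_sum]
                refine Finset.sum_congr rfl fun i _ => ?_
                rw [smul_eq_mul, ← hφψ _ (hqi0 i (w, z))]
      calc ∑ x : W × Z, p x * Real.log (p x / (qW x.1 * μ' x.2))
          ≤ ∑ x : W × Z, (1/(n:ℝ)) * ∑ i, qi i x * Real.log (qi i x / (qW x.1 * μ' x.2)) :=
            Finset.sum_le_sum fun x _ => hpt x
        _ = (1/(n:ℝ)) * ∑ i, T i := by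
            rw [← Finset.mul_sum, Finset.sum_comm]
    have hTi : ∀ i, T i = ∑ x : W × (Fin n → Z),
        q x * Real.log (qi i (x.1, x.2 i) / (qW x.1 * μ' (x.2 i))) := by
      intro i
      simp only [hTdef]
      rw [Fintype.sum_prod_type, Fintype.sum_prod_type]
      refine Finset.sum_congr rfl fun w _ => ?_
      exact hqig i w (fun z => Real.log (qi i (w, z) / (qW w * μ' z)))
    set m : W × (Fin n → Z) → ℝ :=
      fun x => (∏ i, qi i (x.1, x.2 i)) / qW x.1 ^ (n - 1) with hmdef
    have hm0 : ∀ x, 0 ≤ m x := fun x =>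
      div_nonneg (Finset.prod_nonneg fun i _ => hqi0 i _) (pow_nonneg (hqW0 _) _)
    have hmsum : ∑ x, m x = 1 := by
      rw [Fintype.sum_prod_type]
      have hw : ∀ w, ∑ s : Fin n → Z, m (w, s) = qW w := by
        intro w
        simp only [hmdef]
        rw [← Finset.sum_div, sum_pi_prod n (fun i z => qi i (w, z)),
          Finset.prod_congr rfl fun i (_ : i ∈ Finset.univ) => hqiW i w,
          Finset.prod_const, Finset.card_univ, Fintype.card_fin]
        rcases eq_or_ne (qW w) 0 with h | h
        · rw [h, zero_pow hn.ne', zero_div]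
        · rw [show n = (n - 1) + 1 from (Nat.succ_pred_eq_of_pos hn).symm, pow_succ]
          exact mul_div_cancel_left₀ _ (pow_ne_zero _ h)
      rw [Finset.sum_congr rfl fun w _ => hw w]
      exact hqWsum
    have hfacts : ∀ (w : W) (s : Fin n → Z), 0 < q (w, s) →
        0 < qW w ∧ (∀ j, μ' (s j) ≠ 0) ∧ (∀ i, 0 < qi i (w, s i)) ∧ 0 < m (w, s) := by
      intro w s h
      have hqWpos : 0 < qW w :=
        lt_of_lt_of_le h (Finset.single_le_sum (fun s' (_ : s' ∈ Finset.univ) => hq0 (w, s'))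
          (Finset.mem_univ s))
      have hπpos : 0 < ∏ j, μ' (s j) := by
        rw [← hqm s]
        exact lt_of_lt_of_le h (Finset.single_le_sum (fun w' (_ : w' ∈ Finset.univ) => hq0 (w', s))
          (Finset.mem_univ w))
      have hμpos : ∀ j, μ' (s j) ≠ 0 := fun j =>
        Finset.prod_ne_zero_iff.mp hπpos.ne' j (Finset.mem_univ j)
      have hqipos : ∀ i, 0 < qi i (w, s i) := by
        intro i
        refine lt_of_lt_of_le h ?_
        have h2 := Finset.single_le_sum
          (f := fun s' : Fin n → Z => if s' i = s i then q (w, s') else 0)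
          (fun s' _ => by split <;> [exact hq0 _; exact le_rfl]) (Finset.mem_univ s)
        simp only [if_pos rfl] at h2
        simpa [hqidef] using h2
      refine ⟨hqWpos, hμpos, hqipos, ?_⟩
      simp only [hmdef]
      exact div_pos (Finset.prod_pos fun i _ => hqipos i) (pow_pos hqWpos _)
    have hpt2 : ∀ x : W × (Fin n → Z),
        q x * Real.log (q x / (qW x.1 * ∏ j, μ' (x.2 j)))
          - q x * ∑ i, Real.log (qi i (x.1, x.2 i) / (qW x.1 * μ' (x.2 i)))
        = q x * Real.log (q x / m x) := by
      rintro ⟨w, s⟩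
      rcases eq_or_lt_of_le (hq0 (w, s)) with h | h
      · rw [← h]; ring
      · obtain ⟨hqWpos, hμpos, hqipos, hmpos⟩ := hfacts w s h
        have hπpos : 0 < ∏ j, μ' (s j) := by
          rw [← hqm s]
          exact lt_of_lt_of_le h (Finset.single_le_sum
            (fun w' (_ : w' ∈ Finset.univ) => hq0 (w', s)) (Finset.mem_univ w))
        have e1 : Real.log (q (w, s) / (qW w * ∏ j, μ' (s j)))
            = Real.log (q (w, s)) - Real.log (qW w) - ∑ j, Real.log (μ' (s j)) := by
          rw [Real.log_div h.ne' (mul_ne_zero hqWpos.ne' hπpos.ne'),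
            Real.log_mul hqWpos.ne' hπpos.ne', Real.log_prod fun j _ => hμpos j]
          ring
        have e2 : ∀ i : Fin n, Real.log (qi i (w, s i) / (qW w * μ' (s i)))
            = Real.log (qi i (w, s i)) - Real.log (qW w) - Real.log (μ' (s i)) := by
          intro i
          rw [Real.log_div (hqipos i).ne' (mul_ne_zero hqWpos.ne' (hμpos i)),
            Real.log_mul hqWpos.ne' (hμpos i)]
          ring
        have e3 : Real.log (q (w, s) / m (w, s))
            = Real.log (q (w, s))
              - (∑ i, Real.log (qi i (w, s i)) - ((n:ℝ) - 1) * Real.log (qW w)) := by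
          simp only [hmdef]
          rw [Real.log_div h.ne'
              (div_ne_zero (Finset.prod_pos fun i _ => hqipos i).ne' (pow_ne_zero _ hqWpos.ne')),
            Real.log_div (Finset.prod_pos fun i _ => hqipos i).ne' (pow_ne_zero _ hqWpos.ne'),
            Real.log_prod fun i _ => (hqipos i).ne', Real.log_pow]
          have hcast : ((n - 1 : ℕ) : ℝ) = (n : ℝ) - 1 := by
            rw [Nat.cast_sub hn, Nat.cast_one]
          rw [hcast]
          try ring
        calc q (w, s) * Real.log (q (w, s) / (qW w * ∏ j, μ' (s j)))
              - q (w, s) * ∑ i, Real.log (qi i (w, s i) / (qW w * μ' (s i)))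
            = q (w, s) * (Real.log (q (w, s)) - Real.log (qW w) - ∑ j, Real.log (μ' (s j)))
              - q (w, s) * ∑ i, (Real.log (qi i (w, s i)) - Real.log (qW w)
                - Real.log (μ' (s i))) := by
              rw [e1, Finset.sum_congr rfl fun i _ => e2 i]
          _ = q (w, s) * Real.log (q (w, s) / m (w, s)) := by
              rw [e3, Finset.sum_sub_distrib, Finset.sum_sub_distrib, Finset.sum_const,
                Finset.card_univ, Fintype.card_fin, nsmul_eq_mul]
              ring
    have hB : ∑ i, T i ≤ mutInfo q := by
      have hg := gibbs_aux q m hq0 hm0 (fun x hx => by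
        obtain ⟨-, -, -, hm⟩ := hfacts x.1 x.2 ((hq0 x).lt_of_ne (Ne.symm hx))
        exact hm.ne')
      rw [hq1, hmsum] at hg
      have hsplit : mutInfo q - ∑ i, T i
          = ∑ x : W × (Fin n → Z), q x * Real.log (q x / m x) := by
        rw [hMq, Finset.sum_congr rfl fun i (_ : i ∈ (Finset.univ : Finset (Fin n))) => hTi i,
          Finset.sum_comm, ← Finset.sum_sub_distrib]
        refine Finset.sum_congr rfl fun x _ => ?_
        rw [← Finset.mul_sum]
        exact hpt2 x
      linarith
    calc mutInfo p ≤ (1/(n:ℝ)) * ∑ i, T i := hA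
      _ ≤ (1/(n:ℝ)) * mutInfo q := mul_le_mul_of_nonneg_left hB (by positivity)
      _ ≤ (1/(n:ℝ)) * r := mul_le_mul_of_nonneg_left hqI (by positivity)
      _ = r / n := one_div_mul_eq_div _ _
  · -- auxiliary loss constraint
    have hkey := key ℓt
    rw [ge_iff_le, hkey]
    unfold vN
    calc ∑ s : Fin n → Z, (∏ i, μ' (s i)) * ⨅ w : W, (1/(n:ℝ)) * ∑ i, ℓt w (s i)
        = ∑ s : Fin n → Z, ∑ w, q (w, s) * ⨅ w' : W, (1/(n:ℝ)) * ∑ i, ℓt w' (s i) := by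
          refine Finset.sum_congr rfl fun s _ => ?_
          rw [← hqm s, Finset.sum_mul]
      _ ≤ ∑ s : Fin n → Z, ∑ w, q (w, s) * ((1/(n:ℝ)) * ∑ i, ℓt w (s i)) := by
          refine Finset.sum_le_sum fun s _ => Finset.sum_le_sum fun w _ => ?_
          exact mul_le_mul_of_nonneg_left
            (ciInf_le (Set.Finite.bddBelow (Set.finite_range _)) w) (hq0 _)
      _ = ∑ w, ∑ s : Fin n → Z, q (w, s) * ((1/(n:ℝ)) * ∑ i, ℓt w (s i)) :=
          Finset.sum_comm
  · -- generalization gap equality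
    have hkey := key (fun w z => (∑ z', μ z' * ℓ w z') - ℓ w z)
    rw [hkey, Fintype.sum_prod_type]
    refine Finset.sum_congr rfl fun w _ => Finset.sum_congr rfl fun s _ => ?_
    congr 1
    rw [Finset.sum_sub_distrib, Finset.sum_const, Finset.card_univ, Fintype.card_fin,
      nsmul_eq_mul, mul_sub, ← mul_assoc]
    rw [show (1/(n:ℝ)) * (n:ℝ) = 1 by field_simp, one_mul]

/-- Auxiliary-loss improvement of the rate-distortion generalization bound:
D₁(r) ≤ D̃₂(r/n) ≤ D₂(r/n). -/
theorem D1_le_D2tilde_le_D2 [Nonempty Z] (n : ℕ) (hn : 0 < n)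
    (μ μ' : Z → ℝ) (hμ0 : ∀ z, 0 ≤ μ z) (hμ1 : ∑ z, μ z = 1)
    (hμ'0 : ∀ z, 0 ≤ μ' z) (hμ'1 : ∑ z, μ' z = 1)
    (ℓ ℓt : W → Z → ℝ) (r : ℝ) (hr : 0 ≤ r) :
    D1 n μ μ' ℓ r ≤ D2tilde n μ μ' ℓ ℓt (r / n) ∧
      D2tilde n μ μ' ℓ ℓt (r / n) ≤ D2 μ μ' ℓ (r / n) := by
  classical
  obtain ⟨w0⟩ := (inferInstance : Nonempty W)
  have hnR : (0:ℝ) < n := by exact_mod_cast hn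
  have hbdd : BddAbove {g : ℝ | ∃ p : W × Z → ℝ, (∀ x, 0 ≤ p x) ∧ (∑ x, p x = 1) ∧
      (∀ z, (∑ w, p (w, z)) = μ' z) ∧ mutInfo p ≤ r / n ∧
      g = ∑ x : W × Z, p x * ((∑ z, μ z * ℓ x.1 z) - ℓ x.1 x.2)} := by
    refine ⟨Finset.univ.sup' Finset.univ_nonempty
      (fun x : W × Z => (∑ z, μ z * ℓ x.1 z) - ℓ x.1 x.2), ?_⟩
    rintro g ⟨p, h0, h1, -, -, rfl⟩
    exact sum_mul_le_sup' p _ h0 h1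
  have hsub : {g : ℝ | ∃ p : W × Z → ℝ, (∀ x, 0 ≤ p x) ∧ (∑ x, p x = 1) ∧
      (∀ z, (∑ w, p (w, z)) = μ' z) ∧ mutInfo p ≤ r / n ∧
      (∑ x : W × Z, p x * ℓt x.1 x.2) ≥ vN n μ' ℓt ∧
      g = ∑ x : W × Z, p x * ((∑ z, μ z * ℓ x.1 z) - ℓ x.1 x.2)}
      ⊆ {g : ℝ | ∃ p : W × Z → ℝ, (∀ x, 0 ≤ p x) ∧ (∑ x, p x = 1) ∧
      (∀ z, (∑ w, p (w, z)) = μ' z) ∧ mutInfo p ≤ r / n ∧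
      g = ∑ x : W × Z, p x * ((∑ z, μ z * ℓ x.1 z) - ℓ x.1 x.2)} := by
    rintro g ⟨p, h0, h1, h2, h3, h4, h5⟩
    exact ⟨p, h0, h1, h2, h3, h5⟩
  have hbdd2t := hbdd.mono hsub
  -- vN is at most the μ'-expectation of ℓt for any fixed w0
  have hvle : vN n μ' ℓt ≤ ∑ z, μ' z * ℓt w0 z := by
    unfold vN
    calc ∑ s : Fin n → Z, (∏ i, μ' (s i)) * ⨅ w : W, (1/(n:ℝ)) * ∑ i, ℓt w (s i)
        ≤ ∑ s : Fin n → Z, (∏ i, μ' (s i)) * ((1/(n:ℝ)) * ∑ i, ℓt w0 (s i)) := by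
          refine Finset.sum_le_sum fun s _ => ?_
          exact mul_le_mul_of_nonneg_left
            (ciInf_le (Set.Finite.bddBelow (Set.finite_range _)) w0)
            (Finset.prod_nonneg fun i _ => hμ'0 _)
      _ = (1/(n:ℝ)) * ∑ i : Fin n, ∑ s : Fin n → Z, (∏ j, μ' (s j)) * ℓt w0 (s i) := by
          have e : ∀ s : Fin n → Z, (∏ i, μ' (s i)) * ((1/(n:ℝ)) * ∑ i, ℓt w0 (s i))
              = (1/(n:ℝ)) * ∑ i, (∏ j, μ' (s j)) * ℓt w0 (s i) := by
            intro s; rw [← Finset.mul_sum]; ring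
          rw [Finset.sum_congr rfl fun s _ => e s, ← Finset.mul_sum, Finset.sum_comm]
      _ = ∑ z, μ' z * ℓt w0 z := by
          rw [Finset.sum_congr rfl fun i (_ : i ∈ (Finset.univ : Finset (Fin n))) =>
            sum_pi_coord μ' hμ'1 i (ℓt w0), Finset.sum_const, Finset.card_univ,
            Fintype.card_fin, nsmul_eq_mul, ← mul_assoc]
          rw [show (1/(n:ℝ)) * (n:ℝ) = 1 by field_simp, one_mul]
  -- the deterministic single-letter kernel is feasible for D̃₂
  have p0mem : (∑ x : W × Z, ((if x.1 = w0 then (1:ℝ) else 0) * μ' x.2)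
        * ((∑ z, μ z * ℓ x.1 z) - ℓ x.1 x.2))
      ∈ {g : ℝ | ∃ p : W × Z → ℝ, (∀ x, 0 ≤ p x) ∧ (∑ x, p x = 1) ∧
      (∀ z, (∑ w, p (w, z)) = μ' z) ∧ mutInfo p ≤ r / n ∧
      (∑ x : W × Z, p x * ℓt x.1 x.2) ≥ vN n μ' ℓt ∧
      g = ∑ x : W × Z, p x * ((∑ z, μ z * ℓ x.1 z) - ℓ x.1 x.2)} := by
    refine ⟨fun x : W × Z => (if x.1 = w0 then (1:ℝ) else 0) * μ' x.2,
      ?_, ?_, ?_, ?_, ?_, rfl⟩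
    · intro x
      exact mul_nonneg (by split <;> norm_num) (hμ'0 _)
    · rw [Fintype.sum_prod_type]
      have e : ∀ w : W, ∑ z, (if w = w0 then (1:ℝ) else 0) * μ' z
          = if w = w0 then 1 else 0 := by
        intro w; rw [← Finset.mul_sum, hμ'1, mul_one]
      rw [Finset.sum_congr rfl fun w _ => e w]
      simp
    · intro z
      simp [ite_mul]
    · exact le_trans (le_of_eq (mutInfo_det w0 μ' hμ'1)) (div_nonneg hr hnR.le)
    · have e : ∑ x : W × Z, ((if x.1 = w0 then (1:ℝ) else 0) * μ' x.2) * ℓt x.1 x.2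
          = ∑ z, μ' z * ℓt w0 z := by
        rw [Fintype.sum_prod_type]
        have e1 : ∀ w : W, ∑ z, ((if w = w0 then (1:ℝ) else 0) * μ' z) * ℓt w z
            = if w = w0 then ∑ z, μ' z * ℓt w z else 0 := by
          intro w
          split <;> simp
        rw [Finset.sum_congr rfl fun w _ => e1 w,
          Finset.sum_ite_eq' Finset.univ w0 (fun w => ∑ z, μ' z * ℓt w z)]
        simp
      rw [ge_iff_le, e]
      exact hvle
  have hπ1 : ∑ s : Fin n → Z, ∏ i, μ' (s i) = 1 := by
    rw [sum_pi_prod n (fun _ z => μ' z)]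
    simp [hμ'1]
  have q0mem : (∑ x : W × (Fin n → Z), ((if x.1 = w0 then (1:ℝ) else 0) * ∏ i, μ' (x.2 i))
        * ((∑ z, μ z * ℓ x.1 z) - (1/(n:ℝ)) * ∑ i, ℓ x.1 (x.2 i)))
      ∈ {g : ℝ | ∃ q : W × (Fin n → Z) → ℝ, (∀ x, 0 ≤ q x) ∧
      (∑ x, q x = 1) ∧ (∀ s : Fin n → Z, (∑ w, q (w, s)) = ∏ i, μ' (s i)) ∧
      mutInfo q ≤ r ∧
      g = ∑ x : W × (Fin n → Z), q x *
        ((∑ z, μ z * ℓ x.1 z) - (1 / (n : ℝ)) * ∑ i, ℓ x.1 (x.2 i))} := by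
    refine ⟨fun x => (if x.1 = w0 then (1:ℝ) else 0) * ∏ i, μ' (x.2 i),
      ?_, ?_, ?_, ?_, rfl⟩
    · intro x
      exact mul_nonneg (by split <;> norm_num) (Finset.prod_nonneg fun i _ => hμ'0 _)
    · rw [Fintype.sum_prod_type]
      have e : ∀ w : W, ∑ s : Fin n → Z, (if w = w0 then (1:ℝ) else 0) * ∏ i, μ' (s i)
          = if w = w0 then 1 else 0 := by
        intro w; rw [← Finset.mul_sum, hπ1, mul_one]
      rw [Finset.sum_congr rfl fun w _ => e w]
      simp
    · intro s
      simp [ite_mul]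
    · exact le_trans
        (le_of_eq (mutInfo_det w0 (fun s : Fin n → Z => ∏ i, μ' (s i)) hπ1)) hr
  constructor
  · unfold D1 D2tilde
    refine csSup_le ⟨_, q0mem⟩ ?_
    rintro g ⟨q, hq0', hq1', hqm', hqI', rfl⟩
    obtain ⟨p, h0, h1, h2, h3, h4, h5⟩ :=
      construct_mem n hn μ μ' hμ'0 hμ'1 ℓ ℓt r q hq0' hq1' hqm' hqI'
    exact le_csSup hbdd2t ⟨p, h0, h1, h2, h3, h4, h5.symm⟩
  · unfold D2tilde D2
    exact csSup_le_csSup hbdd ⟨_, p0mem⟩ hsub
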